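/- Let J be an invertible n×n complex matrix with J² = αI for some nonzero complex scalar α. Let W₀ be an n×n complex matrix with W₀ᴴJ + JW₀ = 0 and let Q be an n×n complex matrix with QᴴJQ = J. Then W₁ := Qᴴ W₀ J Q J⁻¹ again satisfies W₁ᴴJ + JW₁ = 0; that is, the update W₀ ↦ Qᴴ W₀ J Q J⁻¹ preserves the J-quadratic Lie algebra. -/

import Mathlib

open Matrix

/-- If `J` is invertible with `J² = αI`, `α ≠ 0`, `W₀ᴴJ + JW₀ = 0` and `QᴴJQ = J`,
then `W₁ = Qᴴ W₀ J Q J⁻¹` again satisfies `W₁ᴴJ + JW₁ = 0`. -/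
theorem stmt_4 (n : ℕ) (J W₀ Q : Matrix (Fin n) (Fin n) ℂ) (α : ℂ) (hα : α ≠ 0)
    (hJ : IsUnit J) (hJ2 : J ^ 2 = α • (1 : Matrix (Fin n) (Fin n) ℂ))
    (hW₀ : W₀ᴴ * J + J * W₀ = 0) (hQ : Qᴴ * J * Q = J) :
    (Qᴴ * W₀ * J * Q * J⁻¹)ᴴ * J + J * (Qᴴ * W₀ * J * Q * J⁻¹) = 0 := by
  have hJJ : J * J = α • 1 := by rw [← sq]; exact hJ2
  have hJinv : J⁻¹ = α⁻¹ • J := by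
    apply Matrix.inv_eq_right_inv
    rw [Matrix.mul_smul, hJJ, smul_smul, inv_mul_cancel₀ hα, one_smul]
  have hJd : IsUnit J.det := (Matrix.isUnit_iff_isUnit_det J).mp hJ
  have hJd0 : J.det ≠ 0 := hJd.ne_zero
  -- Q is invertible
  have hQd : IsUnit Q.det := by
    have hd := congrArg Matrix.det hQ
    rw [Matrix.det_mul, Matrix.det_mul, Matrix.det_conjTranspose] at hd
    have h1 : (star Q.det * Q.det) * J.det = 1 * J.det := by
      rw [one_mul]; linear_combination hd
    have h2 : star Q.det * Q.det = 1 := mul_right_cancel₀ hJd0 h1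
    exact IsUnit.of_mul_eq_one _ (by rw [mul_comm]; exact h2)
  have hQd0 : Q.det ≠ 0 := hQd.ne_zero
  have hQHd : IsUnit (Qᴴ).det := by rw [Matrix.det_conjTranspose]; exact hQd.star
  -- W₀ᴴ J = -(J W₀)
  have hW' : W₀ᴴ * J = -(J * W₀) := eq_neg_of_add_eq_zero_left hW₀
  -- key 1 : J Q J⁻¹ = (Qᴴ)⁻¹
  have key1 : J * Q * J⁻¹ = (Qᴴ)⁻¹ := by
    symm
    apply Matrix.inv_eq_right_inv
    rw [← mul_assoc, ← mul_assoc, hQ, Matrix.mul_nonsing_inv J hJd]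
  -- Q⁻¹ = J⁻¹ Qᴴ J
  have hQinv : Q⁻¹ = J⁻¹ * Qᴴ * J := by
    apply Matrix.inv_eq_left_inv
    calc J⁻¹ * Qᴴ * J * Q = J⁻¹ * (Qᴴ * J * Q) := by simp only [mul_assoc]
      _ = 1 := by rw [hQ, Matrix.nonsing_inv_mul J hJd]
  -- key 2 : Q⁻¹ J = J Qᴴ
  have key2 : Q⁻¹ * J = J * Qᴴ := by
    rw [hQinv, hJinv]
    calc α⁻¹ • J * Qᴴ * J * J = α⁻¹ • (J * (Qᴴ * (J * J))) := by
          simp only [Matrix.smul_mul, mul_assoc]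
      _ = α⁻¹ • (J * (Qᴴ * (α • (1 : Matrix (Fin n) (Fin n) ℂ)))) := by rw [hJJ]
      _ = J * Qᴴ := by
          rw [Matrix.mul_smul, mul_one, Matrix.mul_smul, smul_smul,
            inv_mul_cancel₀ hα, one_smul]
  -- key 2' : Q J = J (Qᴴ)⁻¹
  have key2' : Q * J = J * (Qᴴ)⁻¹ := by
    have h : J = Q * (J * Qᴴ) := by
      rw [← key2, ← mul_assoc, Matrix.mul_nonsing_inv Q hQd, one_mul]
    calc Q * J = Q * J * (Qᴴ * (Qᴴ)⁻¹) := by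
          rw [Matrix.mul_nonsing_inv _ hQHd, mul_one]
      _ = Q * (J * Qᴴ) * (Qᴴ)⁻¹ := by simp only [mul_assoc]
      _ = J * (Qᴴ)⁻¹ := by rw [← h]
  -- simplify W₁
  have hW1 : Qᴴ * W₀ * J * Q * J⁻¹ = Qᴴ * W₀ * (Qᴴ)⁻¹ := by
    calc Qᴴ * W₀ * J * Q * J⁻¹ = Qᴴ * W₀ * (J * Q * J⁻¹) := by simp only [mul_assoc]
      _ = Qᴴ * W₀ * (Qᴴ)⁻¹ := by rw [key1]
  have hT : (Qᴴ * W₀ * (Qᴴ)⁻¹)ᴴ = Q⁻¹ * W₀ᴴ * Q := by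
    simp only [conjTranspose_mul, Matrix.conjTranspose_nonsing_inv,
      conjTranspose_conjTranspose, mul_assoc]
  have e : Q⁻¹ * W₀ᴴ * Q * J = -(J * (Qᴴ * W₀ * (Qᴴ)⁻¹)) := by
    calc Q⁻¹ * W₀ᴴ * Q * J = Q⁻¹ * W₀ᴴ * (Q * J) := by simp only [mul_assoc]
      _ = Q⁻¹ * W₀ᴴ * (J * (Qᴴ)⁻¹) := by rw [key2']
      _ = Q⁻¹ * (W₀ᴴ * J) * (Qᴴ)⁻¹ := by simp only [mul_assoc]
      _ = Q⁻¹ * (-(J * W₀)) * (Qᴴ)⁻¹ := by rw [hW']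
      _ = -(Q⁻¹ * J * (W₀ * (Qᴴ)⁻¹)) := by simp only [mul_neg, neg_mul, mul_assoc]
      _ = -(J * Qᴴ * (W₀ * (Qᴴ)⁻¹)) := by rw [key2]
      _ = -(J * (Qᴴ * W₀ * (Qᴴ)⁻¹)) := by simp only [mul_assoc]
  rw [hW1, hT, e, neg_add_cancel]
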